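/- Let G = 2, suppose (1/n)XᵀX = I_p, and let r_j = (1/n)⟨y, x^j⟩. Let α ∈ [0,1], λ_s, λ_d ≥ 0, and let (β̂¹, β̂²) be any global minimizer of the SplitReg objective. If |r_j| > α λ_s and λ_d > 1 + (1−α)λ_s, then exactly one of β̂¹_j, β̂²_j is zero, and the nonzero one equals soft(r_j, α λ_s)/(1 + (1−α)λ_s). -/

import Mathlib

open Finset

/-- The soft-thresholding operator: `soft z γ = sign(z) * max 0 (|z| - γ)`. -/
noncomputable def soft (z γ : ℝ) : ℝ := Real.sign z * max 0 (|z| - γ)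

/-- The SplitReg objective function for data `y`, design matrix `X`,
elastic net mixing parameter `α`, sparsity penalty `lam_s`, diversity penalty `lam_d`,
and coefficient matrix `β` (one column `β g` per group). -/
noncomputable def splitRegObj {n p G : ℕ} (y : Fin n → ℝ) (X : Matrix (Fin n) (Fin p) ℝ)
    (α lam_s lam_d : ℝ) (β : Fin G → Fin p → ℝ) : ℝ :=
  ∑ g : Fin G,
    ((1 / (2 * (n : ℝ))) * ∑ i, (y i - ∑ j, X i j * β g j) ^ 2
      + lam_s * ((1 - α) / 2 * ∑ j, (β g j) ^ 2 + α * ∑ j, |β g j|)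
      + lam_d / 2 * ∑ h ∈ Finset.univ.erase g, ∑ j, |β g j| * |β h j|)

lemma loss_expand {n p : ℕ} (hn : 0 < n) (y : Fin n → ℝ) (X : Matrix (Fin n) (Fin p) ℝ)
    (horth : ∀ j k : Fin p, (1 / (n : ℝ)) * ∑ i, X i j * X i k = if j = k then 1 else 0)
    (v : Fin p → ℝ) :
    (1 / (2 * (n : ℝ))) * ∑ i, (y i - ∑ j, X i j * v j) ^ 2
      = (1 / (2 * (n : ℝ))) * ∑ i, (y i) ^ 2
        + ∑ j, (-(((1 / (n : ℝ)) * ∑ i, y i * X i j) * v j) + (1 / 2) * (v j) ^ 2) := by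
  have hn' : (n : ℝ) ≠ 0 := Nat.cast_ne_zero.mpr hn.ne'
  have hXX : ∀ j k : Fin p, ∑ i, X i j * X i k = (n : ℝ) * (if j = k then 1 else 0) := by
    intro j k
    have h := horth j k
    field_simp at h
    rw [h]
  have e1 : ∑ i, y i * (∑ j, X i j * v j) = ∑ j, (∑ i, y i * X i j) * v j := by
    simp_rw [Finset.mul_sum, ← mul_assoc]
    rw [Finset.sum_comm]
    simp_rw [← Finset.sum_mul]
  have e2 : ∑ i, (∑ j, X i j * v j) ^ 2 = (n : ℝ) * ∑ j, (v j) ^ 2 := by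
    simp_rw [sq, Finset.sum_mul_sum]
    rw [Finset.sum_comm]
    calc ∑ j, ∑ i, ∑ k, (X i j * v j) * (X i k * v k)
        = ∑ j : Fin p, (n : ℝ) * (v j * v j) := by
          refine Finset.sum_congr rfl fun j _ => ?_
          rw [Finset.sum_comm]
          calc ∑ k, ∑ i, (X i j * v j) * (X i k * v k)
              = ∑ k, v j * v k * ∑ i, X i j * X i k := by
                refine Finset.sum_congr rfl fun k _ => ?_
                rw [Finset.mul_sum]
                exact Finset.sum_congr rfl fun i _ => by ring
            _ = ∑ k, v j * v k * ((n : ℝ) * (if j = k then 1 else 0)) := by simp_rw [hXX]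
            _ = (n : ℝ) * (v j * v j) := by
                simp only [mul_ite, mul_one, mul_zero]
                rw [Finset.sum_ite_eq]
                simp
                ring
      _ = (n : ℝ) * ∑ j, v j * v j := by rw [Finset.mul_sum]
  have e3 : ∑ i, (y i - ∑ j, X i j * v j) ^ 2
      = ∑ i, (y i) ^ 2 - 2 * ∑ j, (∑ i, y i * X i j) * v j + (n : ℝ) * ∑ j, (v j) ^ 2 := by
    have : ∀ i, (y i - ∑ j, X i j * v j) ^ 2
        = (y i) ^ 2 - 2 * (y i * ∑ j, X i j * v j) + (∑ j, X i j * v j) ^ 2 := fun i => by ring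
    rw [Finset.sum_congr rfl fun i _ => this i]
    rw [Finset.sum_add_distrib, Finset.sum_sub_distrib, e2, ← Finset.mul_sum, e1]
  have e4 : ∑ j, -(((1 / (n : ℝ)) * ∑ i, y i * X i j) * v j)
      = (-(1 / (n : ℝ))) * ∑ j, (∑ i, y i * X i j) * v j := by
    rw [Finset.mul_sum]
    exact Finset.sum_congr rfl fun k _ => by ring
  have e5 : ∑ j, (1 / 2 : ℝ) * (v j) ^ 2 = (1 / 2) * ∑ j, (v j) ^ 2 := by
    rw [Finset.mul_sum]
  rw [e3, Finset.sum_add_distrib, e4, e5]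
  field_simp
  ring

noncomputable def gfun (R c s : ℝ) (t : ℝ) : ℝ := -(R*t) + c/2*t^2 + s*|t|

set_option maxHeartbeats 1000000 in
lemma scalar_lemma (R c s lam_d : ℝ) (hc : 0 < c) (hs0 : 0 ≤ s) (hρ : s < |R|)
    (hld : c < lam_d) (A B : ℝ)
    (hF : ∀ a b : ℝ, gfun R c s A + gfun R c s B + lam_d * (|A| * |B|)
        ≤ gfun R c s a + gfun R c s b + lam_d * (|a| * |b|)) :
    (A = 0 ∧ B ≠ 0 ∧ B = (Real.sign R * max 0 (|R| - s)) / c) ∨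
    (B = 0 ∧ A ≠ 0 ∧ A = (Real.sign R * max 0 (|R| - s)) / c) := by
  have hg0 : gfun R c s 0 = 0 := by simp [gfun]
  have hR0 : R ≠ 0 := by
    intro h; rw [h, abs_zero] at hρ; linarith
  obtain ⟨m, hmdef⟩ : ∃ x : ℝ, x = (|R| - s)/c := ⟨_, rfl⟩
  have hm : c * m = |R| - s := by rw [hmdef]; field_simp
  have hm0 : 0 < m := hmdef ▸ div_pos (by linarith) hc
  obtain ⟨T, hT⟩ : ∃ x : ℝ, x = Real.sign R * m := ⟨_, rfl⟩
  have hsign : (R < 0 ∧ Real.sign R = -1) ∨ (0 < R ∧ Real.sign R = 1) := by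
    rcases lt_or_gt_of_ne hR0 with h | h
    exacts [Or.inl ⟨h, Real.sign_of_neg h⟩, Or.inr ⟨h, Real.sign_of_pos h⟩]
  have habs_sign : |Real.sign R| = 1 := by
    rcases hsign with ⟨_, h⟩ | ⟨_, h⟩ <;> rw [h] <;> norm_num
  have hRsign : R * Real.sign R = |R| := by
    rcases hsign with ⟨h, hsgn⟩ | ⟨h, hsgn⟩ <;> rw [hsgn]
    · rw [abs_of_neg h]; ring
    · rw [abs_of_pos h]; ring
  have hTabs : |T| = m := by
    rw [hT, abs_mul, habs_sign, one_mul, abs_of_pos hm0]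
  have hTR : R * T = |R| * m := by
    rw [hT, ← mul_assoc, hRsign]
  have hTval : T = (Real.sign R * max 0 (|R| - s)) / c := by
    rw [hT, hmdef, max_eq_right (by linarith : (0:ℝ) ≤ |R| - s), mul_div_assoc]
  have hTne : T ≠ 0 := by
    intro h; rw [h, abs_zero] at hTabs; linarith
  have gid : ∀ t, gfun R c s t = (|R| *|t| - R*t) + c/2*(|t| - m)^2 - c/2*m^2 := by
    intro t
    have h2 : |t|^2 = t^2 := sq_abs t
    simp only [gfun]
    linear_combination (-(c/2)) * h2 + |t| * hm
  have gT : gfun R c s T = -(c/2*m^2) := by rw [gid T, hTabs, hTR]; ring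
  have glb_aux : ∀ t : ℝ, R*t ≤ |R| *|t| := fun t => (le_abs_self _).trans_eq (abs_mul R t)
  have key1 : ∀ t : ℝ, (∀ u : ℝ, gfun R c s t ≤ gfun R c s u) → t = T := by
    intro t hmin'
    have h1 := hmin' T
    rw [gT, gid t] at h1
    have q1 : 0 ≤ |R| *|t| - R*t := by linarith [glb_aux t]
    have q2 : (0:ℝ) ≤ c/2*(|t| - m)^2 := by positivity
    have h3 : (|t| - m)^2 ≤ 0 := by nlinarith
    have h4 : (|t| - m)^2 = 0 := le_antisymm h3 (sq_nonneg _)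
    have habs : |t| = m := sub_eq_zero.mp ((pow_eq_zero_iff two_ne_zero).mp h4)
    have h5 : c/2*(|t| - m)^2 = 0 := by rw [h4]; ring
    have h6 : |R| *|t| - R*t = 0 := by linarith
    have hRt : R * t = |R| * m := by rw [← habs]; linarith
    have hRt0 : 0 < R * t := by
      rw [hRt]; exact mul_pos (abs_pos.mpr hR0) hm0
    rcases hsign with ⟨h, hsgn⟩ | ⟨h, hsgn⟩
    · have ht : t < 0 := by
        by_contra ht'; push_neg at ht'
        nlinarith
      have h7 : -t = m := by rwa [abs_of_neg ht] at habs
      rw [hT, hsgn]; linarith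
    · have ht : 0 < t := by
        by_contra ht'; push_neg at ht'
        nlinarith
      have h7 : t = m := by rwa [abs_of_pos ht] at habs
      rw [hT, hsgn]; linarith
  by_cases hA : A = 0
  · have hgB : ∀ u, gfun R c s B ≤ gfun R c s u := by
      intro u
      have h := hF 0 u
      rw [hA] at h
      simp only [hg0, abs_zero, zero_mul, mul_zero] at h
      linarith
    have hBT : B = T := key1 B hgB
    exact Or.inl ⟨hA, hBT ▸ hTne, hBT.trans hTval⟩
  · have hB : B = 0 := by
      by_contra hBne
      have hu0 : (0:ℝ) ≤ |A| + |B| := by positivity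
      obtain ⟨a', ha'⟩ : ∃ x : ℝ, x = Real.sign R * (|A| + |B|) := ⟨_, rfl⟩
      have habsa' : |a'| = |A| + |B| := by
        rw [ha', abs_mul, habs_sign, one_mul, abs_of_nonneg hu0]
      have hRa' : R * a' = |R| * (|A| + |B|) := by rw [ha', ← mul_assoc, hRsign]
      have ha'sq : a' ^ 2 = (|A| + |B|) ^ 2 := by rw [← sq_abs, habsa']
      have h := hF a' 0
      simp only [hg0, abs_zero, mul_zero, add_zero] at h
      have hgb : gfun R c s a' = -(|R| * (|A| + |B|)) + c/2*(|A| + |B|)^2 + s*(|A| + |B|) := by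
        simp only [gfun]; rw [habsa', hRa', ha'sq]
      have hbA : -(|R| * |A|) + c/2*|A|^2 + s*|A| ≤ gfun R c s A := by
        simp only [gfun]; rw [sq_abs]; linarith [glb_aux A]
      have hbB : -(|R| * |B|) + c/2*|B|^2 + s*|B| ≤ gfun R c s B := by
        simp only [gfun]; rw [sq_abs]; linarith [glb_aux B]
      have hAp : 0 < |A| := abs_pos.mpr hA
      have hBp : 0 < |B| := abs_pos.mpr hBne
      have hineq : lam_d * (|A| * |B|) ≤ c * (|A| * |B|) := by linarith [h, hgb, hbA, hbB]
      have hcontra : 0 < (lam_d - c) * (|A| * |B|) := mul_pos (sub_pos.mpr hld) (mul_pos hAp hBp)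
      nlinarith [hineq, hcontra]
    have hgA : ∀ u, gfun R c s A ≤ gfun R c s u := by
      intro u
      have h := hF u 0
      rw [hB] at h
      simp only [hg0, abs_zero, zero_mul, mul_zero, add_zero] at h
      linarith
    have hAT : A = T := key1 A hgA
    exact Or.inr ⟨hB, hAT ▸ hTne, hAT.trans hTval⟩

noncomputable def coordQ {n p : ℕ} (y : Fin n → ℝ) (X : Matrix (Fin n) (Fin p) ℝ)
    (α lam_s lam_d : ℝ) (k : Fin p) (u v : ℝ) : ℝ :=
  (-(((1 / (n : ℝ)) * ∑ i, y i * X i k) * u)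
      + (1 + (1 - α) * lam_s) / 2 * u ^ 2 + α * lam_s * |u|)
    + (-(((1 / (n : ℝ)) * ∑ i, y i * X i k) * v)
      + (1 + (1 - α) * lam_s) / 2 * v ^ 2 + α * lam_s * |v|)
    + lam_d * (|u| * |v|)

lemma obj_expand {n p : ℕ} (hn : 0 < n) (y : Fin n → ℝ) (X : Matrix (Fin n) (Fin p) ℝ)
    (α lam_s lam_d : ℝ)
    (horth : ∀ j k : Fin p, (1 / (n : ℝ)) * ∑ i, X i j * X i k = if j = k then 1 else 0)
    (β : Fin 2 → Fin p → ℝ) :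
    splitRegObj y X α lam_s lam_d β
      = (1 / (n : ℝ)) * ∑ i, (y i) ^ 2
        + ∑ k, coordQ y X α lam_s lam_d k (β 0 k) (β 1 k) := by
  simp only [coordQ]
  have h0 : (Finset.univ.erase (0 : Fin 2)) = {1} := by decide
  have h1 : (Finset.univ.erase (1 : Fin 2)) = {0} := by decide
  rw [splitRegObj, Fin.sum_univ_two, h0, h1, Finset.sum_singleton, Finset.sum_singleton,
    loss_expand hn y X horth (β 0), loss_expand hn y X horth (β 1)]
  have merge : ∀ w : Fin p → ℝ,
      lam_s * ((1 - α) / 2 * ∑ k, (w k) ^ 2 + α * ∑ k, |w k|)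
        = ∑ k, (lam_s * ((1 - α) / 2 * (w k) ^ 2 + α * |w k|)) := by
    intro w
    rw [Finset.mul_sum, Finset.mul_sum, ← Finset.sum_add_distrib, ← Finset.mul_sum]
  rw [merge (β 0), merge (β 1)]
  have hD1 : lam_d / 2 * (∑ k, |β 0 k| * |β 1 k|) = ∑ k, lam_d / 2 * (|β 0 k| * |β 1 k|) :=
    Finset.mul_sum _ _ _
  have hD2 : lam_d / 2 * (∑ k, |β 1 k| * |β 0 k|) = ∑ k, lam_d / 2 * (|β 1 k| * |β 0 k|) :=
    Finset.mul_sum _ _ _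
  rw [hD1, hD2]
  have hY : (1 / (n : ℝ)) * ∑ i, (y i) ^ 2
      = (1 / (2 * (n : ℝ)) * ∑ i, (y i) ^ 2) + (1 / (2 * (n : ℝ)) * ∑ i, (y i) ^ 2) := by
    ring
  rw [hY]
  have key : (∑ k, (-(((1 / (n : ℝ)) * ∑ i, y i * X i k) * β 0 k) + (1 / 2) * (β 0 k) ^ 2))
      + (∑ k, lam_s * ((1 - α) / 2 * (β 0 k) ^ 2 + α * |β 0 k|))
      + (∑ k, lam_d / 2 * (|β 0 k| * |β 1 k|))
      + (∑ k, (-(((1 / (n : ℝ)) * ∑ i, y i * X i k) * β 1 k) + (1 / 2) * (β 1 k) ^ 2))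
      + (∑ k, lam_s * ((1 - α) / 2 * (β 1 k) ^ 2 + α * |β 1 k|))
      + (∑ k, lam_d / 2 * (|β 1 k| * |β 0 k|))
      = ∑ k, ((-(((1 / (n : ℝ)) * ∑ i, y i * X i k) * β 0 k)
              + (1 + (1 - α) * lam_s) / 2 * (β 0 k) ^ 2 + α * lam_s * |β 0 k|)
            + (-(((1 / (n : ℝ)) * ∑ i, y i * X i k) * β 1 k)
              + (1 + (1 - α) * lam_s) / 2 * (β 1 k) ^ 2 + α * lam_s * |β 1 k|)
            + lam_d * (|β 0 k| * |β 1 k|)) := by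
    rw [← Finset.sum_add_distrib, ← Finset.sum_add_distrib, ← Finset.sum_add_distrib,
      ← Finset.sum_add_distrib, ← Finset.sum_add_distrib]
    exact Finset.sum_congr rfl fun k _ => by ring
  linarith [key]

/-- **Proposition 1, part 2(c) (orthogonal design, `G = 2`).**
If `|r_j| > α λ_s` and `λ_d > 1 + (1-α) λ_s`, then for any global minimizer of the
SplitReg objective exactly one of the `j`-th coefficients of the two models is zero,
and the nonzero one equals `soft(r_j, α λ_s)/(1 + (1-α) λ_s)`. -/
theorem splitreg_orthogonal_large_ld
    {n p : ℕ} (hn : 0 < n) (y : Fin n → ℝ) (X : Matrix (Fin n) (Fin p) ℝ)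
    (α lam_s lam_d : ℝ) (hα : α ∈ Set.Icc (0 : ℝ) 1) (hs : 0 ≤ lam_s) (hd : 0 ≤ lam_d)
    (horth : ∀ j k : Fin p, (1 / (n : ℝ)) * ∑ i, X i j * X i k = if j = k then 1 else 0)
    (βhat : Fin 2 → Fin p → ℝ)
    (hmin : ∀ b : Fin 2 → Fin p → ℝ,
      splitRegObj y X α lam_s lam_d βhat ≤ splitRegObj y X α lam_s lam_d b)
    (j : Fin p)
    (hr : α * lam_s < |(1 / (n : ℝ)) * ∑ i, y i * X i j|)
    (hld : 1 + (1 - α) * lam_s < lam_d) :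
    (βhat 0 j = 0 ∧ βhat 1 j ≠ 0 ∧
      βhat 1 j = soft ((1 / (n : ℝ)) * ∑ i, y i * X i j) (α * lam_s)
        / (1 + (1 - α) * lam_s)) ∨
    (βhat 1 j = 0 ∧ βhat 0 j ≠ 0 ∧
      βhat 0 j = soft ((1 / (n : ℝ)) * ∑ i, y i * X i j) (α * lam_s)
        / (1 + (1 - α) * lam_s)) := by
  have hc : (0:ℝ) < 1 + (1 - α) * lam_s := by nlinarith [hα.2, hs, mul_nonneg (by linarith [hα.2] : (0:ℝ) ≤ 1 - α) hs]
  have hFraw : ∀ a b : ℝ,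
      coordQ y X α lam_s lam_d j (βhat 0 j) (βhat 1 j) ≤ coordQ y X α lam_s lam_d j a b := by
    intro a b
    set β' : Fin 2 → Fin p → ℝ :=
      fun gg => Function.update (βhat gg) j (if gg = 0 then a else b) with hβ'
    have h := hmin β'
    rw [obj_expand hn y X α lam_s lam_d horth βhat,
      obj_expand hn y X α lam_s lam_d horth β'] at h
    have h2 : ∑ k, coordQ y X α lam_s lam_d k (βhat 0 k) (βhat 1 k)
        ≤ ∑ k, coordQ y X α lam_s lam_d k (β' 0 k) (β' 1 k) := by linarith
    rw [← Finset.add_sum_erase Finset.univ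
        (fun k => coordQ y X α lam_s lam_d k (βhat 0 k) (βhat 1 k)) (Finset.mem_univ j),
      ← Finset.add_sum_erase Finset.univ
        (fun k => coordQ y X α lam_s lam_d k (β' 0 k) (β' 1 k)) (Finset.mem_univ j)] at h2
    have heq : ∑ k ∈ Finset.univ.erase j, coordQ y X α lam_s lam_d k (β' 0 k) (β' 1 k)
        = ∑ k ∈ Finset.univ.erase j, coordQ y X α lam_s lam_d k (βhat 0 k) (βhat 1 k) := by
      refine Finset.sum_congr rfl fun k hk => ?_
      have hkj : k ≠ j := (Finset.mem_erase.mp hk).1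
      simp [hβ', Function.update_of_ne hkj]
    have hb0 : β' 0 j = a := by simp [hβ']
    have hb1 : β' 1 j = b := by simp [hβ']
    rw [heq, hb0, hb1] at h2
    linarith
  have hF : ∀ a b : ℝ,
      gfun ((1 / (n : ℝ)) * ∑ i, y i * X i j) (1 + (1 - α) * lam_s) (α * lam_s) (βhat 0 j)
        + gfun ((1 / (n : ℝ)) * ∑ i, y i * X i j) (1 + (1 - α) * lam_s) (α * lam_s) (βhat 1 j)
        + lam_d * (|βhat 0 j| * |βhat 1 j|)
      ≤ gfun ((1 / (n : ℝ)) * ∑ i, y i * X i j) (1 + (1 - α) * lam_s) (α * lam_s) a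
        + gfun ((1 / (n : ℝ)) * ∑ i, y i * X i j) (1 + (1 - α) * lam_s) (α * lam_s) b
        + lam_d * (|a| * |b|) := by
    intro a b
    have := hFraw a b
    simp only [coordQ, gfun] at this ⊢
    linarith
  have hres := scalar_lemma ((1 / (n : ℝ)) * ∑ i, y i * X i j) (1 + (1 - α) * lam_s)
    (α * lam_s) lam_d hc (mul_nonneg hα.1 hs) hr hld (βhat 0 j) (βhat 1 j) hF
  simpa [soft] using hres
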